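/- Let V = ⊕_{n≥0} V_(n) be an ℕ-graded vertex algebra with 2 ≤ dim V_(0) < ∞, such that V_(0) (with product a*b = a_{-1}b) is a local commutative associative algebra. Then V is indecomposable: V cannot be written as a direct sum of two nonzero ideals. -/

import Mathlib

open scoped BigOperators

/-- An ℕ-graded vertex algebra over `ℂ`: a vector space `V` with modes
`u_n v = mode n u v`, vacuum `one` with `Y(1,x) = id` and the creation
property, truncation, the Borcherds identity (equivalent to the Jacobi
identity), and a grading `grade : ℤ → Submodule ℂ V` supported in degrees
`≥ 0` with `1 ∈ V₍₀₎` and `u_m V₍ₙ₎ ⊆ V₍ₖ₊ₙ₋ₘ₋₁₎` for `u ∈ V₍ₖ₎`. -/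
structure NGradedVertexAlgebra (V : Type*) [AddCommGroup V] [Module ℂ V] where
  /-- the modes: `mode n u v = uₙv` -/
  mode : ℤ → V →ₗ[ℂ] V →ₗ[ℂ] V
  one : V
  /-- truncation: `uₙv = 0` for `n` sufficiently large -/
  trunc : ∀ u v : V, ∃ N : ℤ, ∀ n ≥ N, mode n u v = 0
  /-- `Y(1,x) = id` -/
  vacuum : ∀ (n : ℤ) (v : V), mode n one v = if n = -1 then v else 0
  /-- creation: `v₋₁1 = v` -/
  create_neg_one : ∀ v : V, mode (-1) v one = v
  /-- creation: `vₙ1 = 0` for `n ≥ 0` -/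
  create_nonneg : ∀ (v : V) (n : ℤ), 0 ≤ n → mode n v one = 0
  /-- the Borcherds identity, for all `u v w ∈ V` and `l m n ∈ ℤ`:
  `∑ᵢ C(m,i) (u_{l+i}v)_{m+n−i} w
    = ∑ᵢ (−1)ⁱ C(l,i) (u_{l+m−i}(v_{n+i}w) − (−1)ˡ v_{l+n−i}(u_{m+i}w))` -/
  borcherds : ∀ (u v w : V) (l m n : ℤ),
    ∑ᶠ i : ℕ, ((Ring.choose m i : ℤ) : ℂ) •
        mode (m + n - i) (mode (l + i) u v) w
      = ∑ᶠ i : ℕ, ((-1 : ℂ) ^ i * ((Ring.choose l i : ℤ) : ℂ)) •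
          (mode (l + m - i) u (mode (n + i) v w)
            - ((-1 : ℂ) ^ l) • mode (l + n - i) v (mode (m + i) u w))
  /-- the grading -/
  grade : ℤ → Submodule ℂ V
  internal : DirectSum.IsInternal grade
  grade_neg : ∀ n < 0, grade n = ⊥
  one_mem : one ∈ grade 0
  grading : ∀ (k n m : ℤ) (u v : V), u ∈ grade k → v ∈ grade n →
    mode m u v ∈ grade (k + n - m - 1)

/-- An ideal of a vertex algebra: a subspace `I` with `vₙw ∈ I` and `wₙv ∈ I`
for all `v ∈ V`, `w ∈ I`, `n ∈ ℤ`. -/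
def NGradedVertexAlgebra.IsIdeal {V : Type*} [AddCommGroup V] [Module ℂ V]
    (𝒱 : NGradedVertexAlgebra V) (I : Submodule ℂ V) : Prop :=
  ∀ (n : ℤ) (v w : V), w ∈ I → 𝒱.mode n v w ∈ I ∧ 𝒱.mode n w v ∈ I

namespace NGradedVertexAlgebra

variable {V : Type*} [AddCommGroup V] [Module ℂ V] (𝒱 : NGradedVertexAlgebra V)

/-- The projection onto the degree-`n` component. -/
noncomputable def proj (n : ℤ) : V →ₗ[ℂ] V :=
  (𝒱.grade n).subtype ∘ₗ (DirectSum.component ℂ ℤ (fun i => 𝒱.grade i) n) ∘ₗ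
    ((LinearEquiv.ofBijective (DirectSum.coeLinearMap 𝒱.grade) 𝒱.internal).symm :
      V →ₗ[ℂ] DirectSum ℤ (fun i => 𝒱.grade i))

lemma proj_apply (n : ℤ) (x : V) :
    𝒱.proj n x =
      ((LinearEquiv.ofBijective (DirectSum.coeLinearMap 𝒱.grade) 𝒱.internal).symm x n : V) :=
  rfl

lemma proj_mem (n : ℤ) (x : V) : 𝒱.proj n x ∈ 𝒱.grade n := by
  rw [proj_apply]; exact Submodule.coe_mem _

lemma proj_of_mem {p : ℤ} {x : V} (h : x ∈ 𝒱.grade p) (n : ℤ) :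
    𝒱.proj n x = if n = p then x else 0 := by
  rw [proj_apply]
  by_cases hn : n = p
  · subst hn
    rw [𝒱.internal.ofBijective_coeLinearMap_of_mem h]
    simp
  · rw [𝒱.internal.ofBijective_coeLinearMap_of_mem_ne (Ne.symm hn) h]
    simp [hn]

lemma proj_neg {n : ℤ} (hn : n < 0) (x : V) : 𝒱.proj n x = 0 := by
  have h := 𝒱.proj_mem n x
  rw [𝒱.grade_neg n hn] at h
  simpa using h

lemma eq_zero_of_proj {x : V} (h : ∀ n : ℤ, 𝒱.proj n x = 0) : x = 0 := by
  set E := LinearEquiv.ofBijective (DirectSum.coeLinearMap 𝒱.grade) 𝒱.internal with hE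
  have h0 : E.symm x = 0 := by
    apply DFinsupp.ext
    intro n
    have hn := h n
    rw [proj_apply] at hn
    exact Subtype.ext hn
  have h1 : x = E (E.symm x) := (E.apply_symm_apply x).symm
  rw [h0] at h1
  exact h1.trans E.map_zero

lemma proj_mode (k : ℤ) (x y : V) :
    𝒱.proj k (𝒱.mode (-1) x y)
      = ∑ i ∈ Finset.Icc (0 : ℤ) k, 𝒱.mode (-1) (𝒱.proj i x) (𝒱.proj (k - i) y) := by
  have hmem : ∀ z : V, z ∈ ⨆ n, 𝒱.grade n := by
    rw [𝒱.internal.submodule_iSup_eq_top]; exact fun z => trivial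
  -- homogeneous case
  have hom : ∀ (p q : ℤ) (x y : V), x ∈ 𝒱.grade p → y ∈ 𝒱.grade q →
      𝒱.proj k (𝒱.mode (-1) x y)
        = ∑ i ∈ Finset.Icc (0 : ℤ) k, 𝒱.mode (-1) (𝒱.proj i x) (𝒱.proj (k - i) y) := by
    intro p q x y hx hy
    rcases lt_or_ge p 0 with hp | hp
    · have hx0 : x = 0 := by
        rw [𝒱.grade_neg p hp] at hx; simpa using hx
      subst hx0
      simp
    rcases lt_or_ge q 0 with hq | hq
    · have hy0 : y = 0 := by
        rw [𝒱.grade_neg q hq] at hy; simpa using hy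
      subst hy0
      simp
    have hm : 𝒱.mode (-1) x y ∈ 𝒱.grade (p + q) := by
      have h := 𝒱.grading p q (-1) x y hx hy
      have : p + q - (-1) - 1 = p + q := by ring
      rwa [this] at h
    rw [𝒱.proj_of_mem hm k]
    by_cases hpk : p ∈ Finset.Icc (0 : ℤ) k
    · rw [Finset.sum_eq_single_of_mem p hpk (by
        intro i _ hip
        rw [𝒱.proj_of_mem hx i, if_neg hip]
        simp)]
      rw [𝒱.proj_of_mem hx p, if_pos rfl, 𝒱.proj_of_mem hy (k - p)]
      by_cases hk : k = p + q
      · rw [if_pos hk, if_pos (by omega)]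
      · rw [if_neg hk, if_neg (by omega)]
        simp
    · have hk : k ≠ p + q := by
        simp only [Finset.mem_Icc] at hpk; omega
      rw [if_neg hk, Finset.sum_eq_zero]
      intro i hi
      have hip : i ≠ p := by rintro rfl; exact hpk hi
      rw [𝒱.proj_of_mem hx i, if_neg hip]
      simp
  -- induct on y for homogeneous x, then on x
  have step1 : ∀ (p : ℤ) (x : V), x ∈ 𝒱.grade p → ∀ y : V,
      𝒱.proj k (𝒱.mode (-1) x y)
        = ∑ i ∈ Finset.Icc (0 : ℤ) k, 𝒱.mode (-1) (𝒱.proj i x) (𝒱.proj (k - i) y) := by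
    intro p x hx y
    refine Submodule.iSup_induction 𝒱.grade (motive := fun y =>
        𝒱.proj k (𝒱.mode (-1) x y)
          = ∑ i ∈ Finset.Icc (0 : ℤ) k, 𝒱.mode (-1) (𝒱.proj i x) (𝒱.proj (k - i) y))
      (hmem y) ?_ ?_ ?_
    · intro q y hy; exact hom p q x y hx hy
    · simp
    · intro y₁ y₂ h1 h2
      simp only [map_add] at h1 h2 ⊢
      rw [h1, h2, ← Finset.sum_add_distrib]
  refine Submodule.iSup_induction 𝒱.grade (motive := fun x => ∀ y : V,
      𝒱.proj k (𝒱.mode (-1) x y)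
        = ∑ i ∈ Finset.Icc (0 : ℤ) k, 𝒱.mode (-1) (𝒱.proj i x) (𝒱.proj (k - i) y))
    (hmem x) step1 ?_ ?_ y
  · intro y; simp
  · intro x₁ x₂ h1 h2 y
    simp only [map_add, LinearMap.add_apply] at h1 h2 ⊢
    rw [h1 y, h2 y, ← Finset.sum_add_distrib]

/-- If `e` is the `U`-component of the vacuum in a decomposition `V = U ⊕ W` into ideals,
then `e₋₁` acts as the identity on `U`. -/
lemma mode_e_id {U W : Submodule ℂ V} (hU : 𝒱.IsIdeal U) (hW : 𝒱.IsIdeal W)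
    (hUW : U ⊓ W = ⊥) {e f : V} (he : e ∈ U) (hf : f ∈ W) (hef : e + f = 𝒱.one) :
    ∀ u ∈ U, 𝒱.mode (-1) e u = u := by
  intro u hu
  have h1 : 𝒱.mode (-1) f u = 0 := by
    have : 𝒱.mode (-1) f u ∈ U ⊓ W := ⟨(hU (-1) f u hu).1, (hW (-1) u f hf).2⟩
    rw [hUW] at this
    simpa using this
  have h2 : 𝒱.mode (-1) 𝒱.one u = u := by rw [𝒱.vacuum]; simp
  have h3 : 𝒱.mode (-1) e u + 𝒱.mode (-1) f u = 𝒱.mode (-1) 𝒱.one u := by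
    rw [← hef, map_add, LinearMap.add_apply]
  rw [h1, add_zero, h2] at h3
  exact h3

/-- If the degree-0 component of `e` vanishes, then `U = ⊥`. -/
lemma bot_of_proj_zero {U W : Submodule ℂ V} (hU : 𝒱.IsIdeal U) (hW : 𝒱.IsIdeal W)
    (hUW : U ⊓ W = ⊥) {e f : V} (he : e ∈ U) (hf : f ∈ W) (hef : e + f = 𝒱.one)
    (ha : 𝒱.proj 0 e = 0) : U = ⊥ := by
  have hP := 𝒱.mode_e_id hU hW hUW he hf hef
  have heall : ∀ n : ℕ, 𝒱.proj (n : ℤ) e = 0 := by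
    intro n
    induction n using Nat.strong_induction_on with
    | _ n ih =>
      have he2 : 𝒱.mode (-1) e e = e := hP e he
      rw [← he2, 𝒱.proj_mode]
      apply Finset.sum_eq_zero
      intro i hi
      rw [Finset.mem_Icc] at hi
      rcases eq_or_lt_of_le hi.2 with h | h
      · have : (n : ℤ) - i = 0 := by omega
        rw [this, ha]
        simp
      · obtain ⟨m, rfl⟩ := Int.eq_ofNat_of_zero_le hi.1
        rw [ih m (by exact_mod_cast h)]
        simp
  have he0 : e = 0 := by
    apply 𝒱.eq_zero_of_proj
    intro n
    rcases le_or_gt 0 n with h | h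
    · obtain ⟨m, rfl⟩ := Int.eq_ofNat_of_zero_le h
      exact heall m
    · exact 𝒱.proj_neg h e
  rw [eq_bot_iff]
  intro u hu
  have h := hP u hu
  rw [he0] at h
  simp only [map_zero, LinearMap.zero_apply] at h
  rw [← h]
  exact Submodule.zero_mem ⊥

end NGradedVertexAlgebra

/-- Let `V = ⊕ₙ V₍ₙ₎` be an ℕ-graded vertex algebra with
`2 ≤ dim V₍₀₎ < ∞`, such that `V₍₀₎` (with product `a*b = a₋₁b`) is a local
commutative associative algebra — equivalently (finite dimension), for every
`a ∈ V₍₀₎` either `a` or `1 − a` is a unit of `V₍₀₎`.  Then `V` is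
indecomposable: it is not a direct sum of two nonzero ideals. -/
theorem stmt_18 {V : Type*} [AddCommGroup V] [Module ℂ V]
    (𝒱 : NGradedVertexAlgebra V)
    [FiniteDimensional ℂ (𝒱.grade 0)]
    (hdim : 2 ≤ Module.finrank ℂ (𝒱.grade 0))
    (hlocal : ∀ a ∈ 𝒱.grade 0,
      (∃ b ∈ 𝒱.grade 0, 𝒱.mode (-1) a b = 𝒱.one) ∨
      (∃ b ∈ 𝒱.grade 0, 𝒱.mode (-1) (𝒱.one - a) b = 𝒱.one)) :
    ¬ ∃ U W : Submodule ℂ V, 𝒱.IsIdeal U ∧ 𝒱.IsIdeal W ∧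
        U ≠ ⊥ ∧ W ≠ ⊥ ∧ U ⊓ W = ⊥ ∧ U ⊔ W = ⊤ := by
  rintro ⟨U, W, hU, hW, hUne, hWne, hinf, hsup⟩
  obtain ⟨e, he, f, hf, hef⟩ : ∃ e ∈ U, ∃ f ∈ W, e + f = 𝒱.one := by
    have h1 : 𝒱.one ∈ U ⊔ W := by rw [hsup]; trivial
    exact Submodule.mem_sup.mp h1
  set a := 𝒱.proj 0 e with ha
  have hamem : a ∈ 𝒱.grade 0 := 𝒱.proj_mem 0 e
  have hone0 : 𝒱.proj 0 𝒱.one = 𝒱.one := by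
    rw [𝒱.proj_of_mem 𝒱.one_mem, if_pos rfl]
  -- key: proj₀ is multiplicative for mode (-1)
  have claimC : ∀ x y : V, 𝒱.proj 0 (𝒱.mode (-1) x y)
      = 𝒱.mode (-1) (𝒱.proj 0 x) (𝒱.proj 0 y) := by
    intro x y
    rw [𝒱.proj_mode]
    simp
  have hPid := 𝒱.mode_e_id hU hW hinf he hf hef
  have hPU : ∀ v : V, 𝒱.mode (-1) e v ∈ U := fun v => (hU (-1) v e he).2
  -- idempotence of b ↦ a₋₁ b on grade 0
  have hT : ∀ b ∈ 𝒱.grade 0, 𝒱.mode (-1) a (𝒱.mode (-1) a b) = 𝒱.mode (-1) a b := by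
    intro b hb
    have hb0 : 𝒱.proj 0 b = b := by rw [𝒱.proj_of_mem hb, if_pos rfl]
    have h1 : 𝒱.mode (-1) a b = 𝒱.proj 0 (𝒱.mode (-1) e b) := by
      rw [claimC, hb0]
    have h2 : 𝒱.mode (-1) e (𝒱.mode (-1) e b) = 𝒱.mode (-1) e b := hPid _ (hPU b)
    calc 𝒱.mode (-1) a (𝒱.mode (-1) a b)
        = 𝒱.mode (-1) (𝒱.proj 0 e) (𝒱.proj 0 (𝒱.mode (-1) e b)) := by rw [← h1, ha]
      _ = 𝒱.proj 0 (𝒱.mode (-1) e (𝒱.mode (-1) e b)) := (claimC _ _).symm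
      _ = 𝒱.proj 0 (𝒱.mode (-1) e b) := by rw [h2]
      _ = 𝒱.mode (-1) a b := h1.symm
  rcases hlocal a hamem with ⟨b, hb, hab⟩ | ⟨b, hb, hab⟩
  · -- a is a unit, hence a = 1, hence proj₀ f = 0 and W = ⊥
    have ha1 : a = 𝒱.one := by
      have h1 := hT b hb
      rw [hab, 𝒱.create_neg_one] at h1
      exact h1
    have hfa : 𝒱.proj 0 f = 0 := by
      have hfe : f = 𝒱.one - e := by rw [← hef]; abel
      rw [hfe, map_sub, hone0, ← ha, ha1, sub_self]
    exact hWne (𝒱.bot_of_proj_zero hW hU (by rwa [inf_comm]) hf he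
      (by rw [add_comm]; exact hef) hfa)
  · -- 1 - a is a unit, hence a = 0, hence U = ⊥
    have hb' : b - 𝒱.mode (-1) a b = 𝒱.one := by
      have hv : 𝒱.mode (-1) 𝒱.one b = b := by rw [𝒱.vacuum]; simp
      rw [map_sub, LinearMap.sub_apply, hv] at hab
      exact hab
    have hTb0 : 𝒱.mode (-1) a (b - 𝒱.mode (-1) a b) = 0 := by
      rw [map_sub, hT b hb, sub_self]
    have ha0 : a = 0 := by
      rw [← 𝒱.create_neg_one a, ← hb', hTb0]
    exact hUne (𝒱.bot_of_proj_zero hU hW hinf he hf hef (ha ▸ ha0))
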